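/- For any n×n Hermitian matrices A, B of Frobenius norm 1 and any integer m ≥ 2, |Tr[A^{m-1}B]| ≤ 1; equality implies A = ±B, B is diagonalizable with the same eigenbasis as A, and if m > 2 then A has exactly one nonzero eigenvalue. -/

import Mathlib

open Matrix BigOperators ComplexOrder

/-- `S A B m k` is the sum of all words of length `m` in the matrices `A` and `B`
in which `B` appears exactly `k` times (the coefficient of `t^k` in `(A+tB)^m`). -/
noncomputable def S {n : ℕ} (A B : Matrix (Fin n) (Fin n) ℂ) (m k : ℕ) :
    Matrix (Fin n) (Fin n) ℂ :=
  ∑ f ∈ Finset.univ.filter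
      (fun f : Fin m → Bool => (Finset.univ.filter (fun i => f i = true)).card = k),
    (List.ofFn (fun i : Fin m => if f i then B else A)).prod

/-- The Frobenius (Euclidean) norm of a complex matrix, `‖A‖ = Tr[AA*]^{1/2}`. -/
noncomputable def frobNorm {n : ℕ} (A : Matrix (Fin n) (Fin n) ℂ) : ℝ :=
  Real.sqrt (Matrix.trace (A * Aᴴ)).re

set_option maxHeartbeats 2000000 in
theorem stmt_19 {n : ℕ} (A B : Matrix (Fin n) (Fin n) ℂ)
    (hA : A.IsHermitian) (hB : B.IsHermitian)
    (hnA : frobNorm A = 1) (hnB : frobNorm B = 1) (m : ℕ) (hm : 2 ≤ m) :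
    ‖Matrix.trace (A ^ (m - 1) * B)‖ ≤ 1 ∧
      (‖Matrix.trace (A ^ (m - 1) * B)‖ = 1 →
        (A = B ∨ A = -B) ∧ A * B = B * A ∧
          (2 < m → ∃ i : Fin n, hA.eigenvalues i ≠ 0 ∧
            ∀ j : Fin n, j ≠ i → hA.eigenvalues j = 0)) := by
  classical
  set lam : Fin n → ℝ := hA.eigenvalues with hlamdef
  set U : Matrix (Fin n) (Fin n) ℂ := (hA.eigenvectorUnitary : Matrix (Fin n) (Fin n) ℂ)
    with hUdef
  have hU1 : U * star U = 1 := Matrix.mem_unitaryGroup_iff.mp hA.eigenvectorUnitary.2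
  have hU2 : star U * U = 1 := Matrix.mem_unitaryGroup_iff'.mp hA.eigenvectorUnitary.2
  set D : Matrix (Fin n) (Fin n) ℂ := Matrix.diagonal (fun i => (lam i : ℂ)) with hDdef
  have hAeq : A = U * D * star U := hA.spectral_theorem
  set C : Matrix (Fin n) (Fin n) ℂ := star U * B * U with hCdef
  have hBeq : B = U * C * star U := by
    have h : U * (star U * B * U) * star U = (U * star U) * B * (U * star U) := by
      simp only [Matrix.mul_assoc]
    rw [hCdef, h, hU1, Matrix.one_mul, Matrix.mul_one]
  -- powers
  have hpow : ∀ k : ℕ, A ^ k = U * D ^ k * star U := by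
    intro k
    induction k with
    | zero => simp [hU1]
    | succ k ih =>
      have h1 : star U * (U * (D * star U)) = D * star U := by
        rw [← Matrix.mul_assoc, hU2, Matrix.one_mul]
      rw [pow_succ, ih]
      conv_lhs => rw [hAeq]
      simp only [Matrix.mul_assoc, h1]
      rw [show D ^ k * (D * star U) = D ^ (k+1) * star U by
        rw [← Matrix.mul_assoc, ← pow_succ]]
  -- trace formula
  have htrace : ∀ k : ℕ, Matrix.trace (A ^ k * B) = ∑ i, ((lam i : ℂ)) ^ k * C i i := by
    intro k
    have h1 : A ^ k * B = U * (D ^ k * C) * star U := by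
      rw [hpow k, hBeq]
      have h : star U * (U * (C * star U)) = C * star U := by
        rw [← Matrix.mul_assoc, hU2, Matrix.one_mul]
      simp only [Matrix.mul_assoc, h]
    rw [h1, Matrix.trace_mul_comm, ← Matrix.mul_assoc, hU2, Matrix.one_mul]
    rw [hDdef, Matrix.diagonal_pow]
    simp [Matrix.trace, Matrix.diag, Matrix.mul_apply, Matrix.diagonal_apply,
      Finset.sum_ite_eq, Pi.pow_apply]
  -- C is Hermitian
  have hCH : C.IsHermitian := by
    rw [hCdef]
    simp only [Matrix.IsHermitian, Matrix.conjTranspose_mul, Matrix.star_eq_conjTranspose,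
      Matrix.conjTranspose_conjTranspose, hB.eq, Matrix.mul_assoc]
  set c : Fin n → ℝ := fun i => (C i i).re with hcdef
  have hCdiag : ∀ i, C i i = (c i : ℂ) := fun i => (hCH.coe_re_apply_self i).symm
  -- norm of A
  have hsumlam : ∑ i, lam i ^ 2 = 1 := by
    have h0 : Matrix.trace (A * Aᴴ) = ∑ i, ((lam i : ℂ)) ^ 2 := by
      rw [hA.eq, show A * A = A ^ 2 by rw [sq], hpow 2, Matrix.trace_mul_comm,
        ← Matrix.mul_assoc, hU2, Matrix.one_mul, hDdef, Matrix.diagonal_pow]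
      simp [Matrix.trace, Matrix.diag, Matrix.diagonal_apply, Pi.pow_apply]
    have h1 : Matrix.trace (A * Aᴴ) = ((∑ i, lam i ^ 2 : ℝ) : ℂ) := by
      rw [h0]; push_cast; ring
    have h2 : (Matrix.trace (A * Aᴴ)).re = 1 := Real.sqrt_eq_one.mp hnA
    rw [h1, Complex.ofReal_re] at h2
    exact h2
  -- norm of B via C
  have hsumC : ∑ i, ∑ j, Complex.normSq (C i j) = 1 := by
    have h0 : Matrix.trace (B * Bᴴ) = Matrix.trace (C * Cᴴ) := by
      rw [hB.eq, hCH.eq, hBeq]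
      have h : star U * (U * (C * star U)) = C * star U := by
        rw [← Matrix.mul_assoc, hU2, Matrix.one_mul]
      rw [show U * C * star U * (U * C * star U) = U * (C * C) * star U by
        simp only [Matrix.mul_assoc, h]]
      rw [Matrix.trace_mul_comm, ← Matrix.mul_assoc, hU2, Matrix.one_mul]
    have h1 : Matrix.trace (C * Cᴴ) = ((∑ i, ∑ j, Complex.normSq (C i j) : ℝ) : ℂ) := by
      simp only [Matrix.trace, Matrix.diag, Matrix.mul_apply, Matrix.conjTranspose_apply]
      push_cast
      refine Finset.sum_congr rfl fun i _ => Finset.sum_congr rfl fun j _ => ?_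
      exact Complex.mul_conj (C i j)
    have h2 : (Matrix.trace (B * Bᴴ)).re = 1 := Real.sqrt_eq_one.mp hnB
    rw [h0, h1] at h2
    simpa using h2
  have hsumc : ∑ i, c i ^ 2 ≤ 1 := by
    rw [← hsumC]
    refine Finset.sum_le_sum fun i _ => ?_
    have h1 : Complex.normSq (C i i) = c i ^ 2 := by
      rw [hCdiag i]; simp [Complex.normSq_ofReal, sq]
    rw [← h1]
    exact Finset.single_le_sum (fun j _ => Complex.normSq_nonneg _) (Finset.mem_univ i)
  have hsumc0 : (0:ℝ) ≤ ∑ i, c i ^ 2 := Finset.sum_nonneg fun i _ => sq_nonneg _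
  -- lambda bounds
  have hlamle : ∀ i, lam i ^ 2 ≤ 1 := by
    intro i
    rw [← hsumlam]
    exact Finset.single_le_sum (fun j _ => sq_nonneg (lam j)) (Finset.mem_univ i)
  have hterm : ∀ i, (lam i ^ (m-1)) ^ 2 ≤ lam i ^ 2 := by
    intro i
    have h1 : (lam i ^ (m-1)) ^ 2 = (lam i ^ 2) ^ (m-1) := by
      rw [← pow_mul, ← pow_mul, Nat.mul_comm]
    rw [h1]
    calc (lam i ^ 2) ^ (m-1) ≤ (lam i ^ 2) ^ 1 :=
          pow_le_pow_of_le_one (sq_nonneg _) (hlamle i) (by omega)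
      _ = lam i ^ 2 := pow_one _
  have hS1le : ∑ i, (lam i ^ (m-1)) ^ 2 ≤ 1 := by
    calc ∑ i, (lam i ^ (m-1)) ^ 2 ≤ ∑ i, lam i ^ 2 := Finset.sum_le_sum fun i _ => hterm i
      _ = 1 := hsumlam
  have hS10 : (0:ℝ) ≤ ∑ i, (lam i ^ (m-1)) ^ 2 := Finset.sum_nonneg fun i _ => sq_nonneg _
  -- the trace is real
  set t : ℝ := ∑ i, lam i ^ (m-1) * c i with htdef
  have hz : Matrix.trace (A ^ (m-1) * B) = (t : ℂ) := by
    rw [htrace (m-1), htdef]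
    push_cast
    refine Finset.sum_congr rfl fun i _ => ?_
    rw [hCdiag i]
  have habs : ‖Matrix.trace (A ^ (m-1) * B)‖ = |t| := by
    rw [hz, Complex.norm_real, Real.norm_eq_abs]
  have hCS : t ^ 2 ≤ (∑ i, (lam i ^ (m-1)) ^ 2) * (∑ i, c i ^ 2) := by
    rw [htdef]
    exact Finset.sum_mul_sq_le_sq_mul_sq _ _ _
  constructor
  · rw [habs]
    have h1 : t ^ 2 ≤ 1 := by nlinarith
    nlinarith [sq_abs t, abs_nonneg t]
  · intro heq
    rw [habs] at heq
    have ht2 : t ^ 2 = 1 := by rw [← sq_abs, heq]; norm_num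
    have hS1 : ∑ i, (lam i ^ (m-1)) ^ 2 = 1 := by nlinarith
    have hS2 : ∑ i, c i ^ 2 = 1 := by nlinarith
    -- c i = t * lam i ^ (m-1)
    have hzero : ∑ i, (c i - t * lam i ^ (m-1)) ^ 2 = 0 := by
      have hexp : ∀ i ∈ Finset.univ, (c i - t * lam i ^ (m-1)) ^ 2 =
          c i ^ 2 - (2*t) * (lam i ^ (m-1) * c i) + t^2 * (lam i ^ (m-1)) ^ 2 :=
        fun i _ => by ring
      rw [Finset.sum_congr rfl hexp, Finset.sum_add_distrib, Finset.sum_sub_distrib,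
        ← Finset.mul_sum, ← Finset.mul_sum, hS2, hS1, ← htdef]
      nlinarith
    have hc : ∀ i, c i = t * lam i ^ (m-1) := by
      intro i
      have h1 := (Finset.sum_eq_zero_iff_of_nonneg (fun i _ => sq_nonneg
        (c i - t * lam i ^ (m-1)))).mp hzero i (Finset.mem_univ i)
      have h2 : c i - t * lam i ^ (m-1) = 0 := by
        exact pow_eq_zero_iff (two_ne_zero) |>.mp h1
      linarith
    -- off-diagonal of C vanishes
    have hoff : ∀ i j, i ≠ j → C i j = 0 := by
      have hdiagsum : ∑ i, Complex.normSq (C i i) = 1 := by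
        rw [← hS2]
        refine Finset.sum_congr rfl fun i _ => ?_
        rw [hCdiag i]; simp [Complex.normSq_ofReal, sq]
      have hrow : ∀ i, ∑ j, Complex.normSq (C i j) = Complex.normSq (C i i) := by
        have h0 : ∑ i, (∑ j, Complex.normSq (C i j) - Complex.normSq (C i i)) = 0 := by
          rw [Finset.sum_sub_distrib, hsumC, hdiagsum]; ring
        intro i
        have h1 := (Finset.sum_eq_zero_iff_of_nonneg (fun i _ => by
          have := Finset.single_le_sum (fun j (_ : j ∈ Finset.univ) =>
            Complex.normSq_nonneg (C i j)) (Finset.mem_univ i)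
          linarith)).mp h0 i (Finset.mem_univ i)
        linarith
      intro i j hij
      have h2 : ∑ k ∈ Finset.univ.erase i, Complex.normSq (C i k) = 0 := by
        have h3 := Finset.sum_erase_add Finset.univ (fun k => Complex.normSq (C i k))
          (Finset.mem_univ i)
        have h4 := hrow i
        linarith [h3, h4]
      have h5 := (Finset.sum_eq_zero_iff_of_nonneg (fun k _ =>
        Complex.normSq_nonneg (C i k))).mp h2 j (Finset.mem_erase.mpr ⟨(Ne.symm hij), Finset.mem_univ j⟩)
      exact Complex.normSq_eq_zero.mp h5
    have hCdiagonal : C = Matrix.diagonal (fun i => ((t * lam i ^ (m-1) : ℝ) : ℂ)) := by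
      ext i j
      by_cases h : i = j
      · subst h
        rw [Matrix.diagonal_apply_eq, hCdiag i, hc i]
      · rw [Matrix.diagonal_apply_ne _ h, hoff i j h]
    -- B = t • A^(m-1)
    have hBt : B = (t:ℂ) • A ^ (m-1) := by
      have h1 : C = (t:ℂ) • D ^ (m-1) := by
        rw [hCdiagonal, hDdef, Matrix.diagonal_pow]
        ext i j
        by_cases h : i = j
        · subst h
          simp only [Matrix.smul_apply, Matrix.diagonal_apply_eq, Pi.pow_apply,
            smul_eq_mul]
          push_cast
          ring
        · simp [Matrix.diagonal_apply_ne _ h]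
      rw [hBeq, h1, hpow (m-1), Matrix.mul_smul, Matrix.smul_mul]
    have htpm : t = 1 ∨ t = -1 := by
      rcases mul_self_eq_one_iff.mp (by rw [← pow_two]; exact ht2 : t * t = 1) with h | h
      · exact Or.inl h
      · exact Or.inr h
    have hcomm : A * B = B * A := by
      rw [hBt, Matrix.mul_smul, Matrix.smul_mul]
      congr 1
      exact (pow_mul_comm' A (m-1)).symm
    -- get eps with A^(m-1) = eps • A, plus rigidity
    rcases lt_or_eq_of_le hm with hm2 | hm2
    · -- 2 < m : rigidity
      have htermeq : ∀ i, (lam i ^ (m-1)) ^ 2 = lam i ^ 2 := by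
        have h0 : ∑ i, (lam i ^ 2 - (lam i ^ (m-1)) ^ 2) = 0 := by
          rw [Finset.sum_sub_distrib, hsumlam, hS1]; ring
        intro i
        have h1 := (Finset.sum_eq_zero_iff_of_nonneg (fun i _ => by
          linarith [hterm i])).mp h0 i (Finset.mem_univ i)
        linarith
      have hsq01 : ∀ i, lam i = 0 ∨ lam i ^ 2 = 1 := by
        intro i
        by_cases h0 : lam i = 0
        · exact Or.inl h0
        · right
          by_contra h1
          have hx0 : 0 < lam i ^ 2 := by positivity
          have hx1 : lam i ^ 2 < 1 := lt_of_le_of_ne (hlamle i) h1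
          have h2 : (lam i ^ 2) ^ (m-1) ≤ (lam i ^ 2) ^ 2 :=
            pow_le_pow_of_le_one (le_of_lt hx0) (le_of_lt hx1) (by omega)
          have h3 : (lam i ^ 2) ^ 2 < lam i ^ 2 := by nlinarith
          have h4 : (lam i ^ (m-1)) ^ 2 = (lam i ^ 2) ^ (m-1) := by
            rw [← pow_mul, ← pow_mul, Nat.mul_comm]
          have := htermeq i
          rw [h4] at this
          linarith
      obtain ⟨i, hi⟩ : ∃ i, lam i ≠ 0 := by
        by_contra h
        push_neg at h
        have : ∑ i, lam i ^ 2 = 0 := Finset.sum_eq_zero fun i _ => by rw [h i]; ring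
        linarith
      have hlami : lam i ^ 2 = 1 := (hsq01 i).resolve_left hi
      have hrest : ∀ j, j ≠ i → lam j = 0 := by
        have h2 : ∑ k ∈ Finset.univ.erase i, lam k ^ 2 = 0 := by
          have h3 : ∑ k ∈ Finset.univ.erase i, lam k ^ 2 + lam i ^ 2 = 1 := by
            rw [← hsumlam]
            exact Finset.sum_erase_add _ _ (Finset.mem_univ i)
          linarith
        intro j hj
        have h5 := (Finset.sum_eq_zero_iff_of_nonneg (fun k _ =>
          sq_nonneg (lam k))).mp h2 j (Finset.mem_erase.mpr ⟨hj, Finset.mem_univ j⟩)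
        exact pow_eq_zero_iff two_ne_zero |>.mp h5
      -- A^(m-1) = eps • A
      set eps : ℝ := lam i ^ (m-2) with hepsdef
      have heps2 : eps * eps = 1 := by
        rw [hepsdef, ← pow_add, show (m-2) + (m-2) = 2 * (m-2) by ring, pow_mul, hlami,
          one_pow]
      have hepspm : eps = 1 ∨ eps = -1 := mul_self_eq_one_iff.mp heps2
      have hApow : A ^ (m-1) = (eps:ℂ) • A := by
        have hfun : (fun i => ((lam i : ℂ))) ^ (m-1) = (eps:ℂ) • (fun i => ((lam i : ℂ))) := by
          funext j
          simp only [Pi.pow_apply, Pi.smul_apply, smul_eq_mul]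
          by_cases hji : j = i
          · subst hji
            rw [hepsdef]
            push_cast
            rw [show m - 1 = (m-2) + 1 by omega, pow_succ]
          · rw [hrest j hji]
            push_cast
            rw [zero_pow (by omega : m - 1 ≠ 0), mul_zero]
        rw [hpow (m-1), hDdef, Matrix.diagonal_pow, hfun, Matrix.diagonal_smul,
          Matrix.mul_smul, Matrix.smul_mul, ← hDdef, ← hAeq]
      refine ⟨?_, hcomm, fun _ => ⟨i, hi, hrest⟩⟩
      rw [hApow] at hBt
      rw [smul_smul] at hBt
      rcases htpm with ht | ht <;> rcases hepspm with he | he <;>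
        rw [ht, he] at hBt <;> push_cast at hBt <;> simp at hBt
      · exact Or.inl hBt.symm
      · right; rw [hBt]; simp
      · right; rw [hBt]; simp
      · exact Or.inl hBt.symm
    · -- m = 2
      have hm1 : m - 1 = 1 := by omega
      rw [hm1, pow_one] at hBt
      refine ⟨?_, hcomm, fun h => absurd h (by omega)⟩
      rcases htpm with ht | ht <;> rw [ht] at hBt <;> push_cast at hBt <;> simp at hBt
      · exact Or.inl hBt.symm
      · right; rw [hBt]; simp
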